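/- The map h² : HS²(G,A) → H²(G,A) induced by the inclusion of Σ₃-invariant 2-cochains into all 2-cochains is injective. -/
import Mathlib


/-- Injectivity of `h² : HS²(G,A) → H²(G,A)`: if two `Σ₃`-invariant 2-cocycles
(`Σ₃` acting via Staic's formulas `(τ₁σ)(g₁,g₂) = −g₁σ(g₁⁻¹, g₁g₂)`,
`(τ₂σ)(g₁,g₂) = −σ(g₁g₂, g₂⁻¹)`) differ by the coboundary of a 1-cochain, then
they differ by the coboundary of a `Σ₂`-invariant 1-cochain. -/
theorem symmetric_h2_injective
    {G A : Type*} [Group G] [AddCommGroup A] [DistribMulAction G A]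
    (σ₁ σ₂ : G → G → A)
    (hc₁ : ∀ g₁ g₂ g₃ : G,
      g₁ • σ₁ g₂ g₃ - σ₁ (g₁ * g₂) g₃ + σ₁ g₁ (g₂ * g₃) - σ₁ g₁ g₂ = 0)
    (hc₂ : ∀ g₁ g₂ g₃ : G,
      g₁ • σ₂ g₂ g₃ - σ₂ (g₁ * g₂) g₃ + σ₂ g₁ (g₂ * g₃) - σ₂ g₁ g₂ = 0)
    (hi₁ : (∀ g₁ g₂ : G, -(g₁ • σ₁ g₁⁻¹ (g₁ * g₂)) = σ₁ g₁ g₂) ∧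
           (∀ g₁ g₂ : G, -σ₁ (g₁ * g₂) g₂⁻¹ = σ₁ g₁ g₂))
    (hi₂ : (∀ g₁ g₂ : G, -(g₁ • σ₂ g₁⁻¹ (g₁ * g₂)) = σ₂ g₁ g₂) ∧
           (∀ g₁ g₂ : G, -σ₂ (g₁ * g₂) g₂⁻¹ = σ₂ g₁ g₂))
    (hcob : ∃ μ : G → A,
      ∀ g₁ g₂ : G, σ₁ g₁ g₂ - σ₂ g₁ g₂ = g₁ • μ g₂ - μ (g₁ * g₂) + μ g₁) :
    ∃ μ : G → A, (∀ g : G, -(g • μ g⁻¹) = μ g) ∧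
      ∀ g₁ g₂ : G, σ₁ g₁ g₂ - σ₂ g₁ g₂ = g₁ • μ g₂ - μ (g₁ * g₂) + μ g₁ := by
  obtain ⟨μ, hμ⟩ := hcob
  refine ⟨μ, fun g => ?_, hμ⟩
  have A1 := hμ g 1
  have A2 := hμ g⁻¹ g
  have B1 := hi₁.1 g 1
  have B2 := hi₂.1 g 1
  simp only [mul_one, inv_mul_cancel] at A1 A2 B1 B2
  have key : σ₁ g 1 - σ₂ g 1 = -(g • (σ₁ g⁻¹ g - σ₂ g⁻¹ g)) := by
    rw [smul_sub, ← B1, ← B2]; abel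
  rw [A1, A2] at key
  have h2 : g • (g⁻¹ • μ g) = μ g := by
    rw [smul_smul, mul_inv_cancel, one_smul]
  rw [smul_add, smul_sub, h2, neg_add, neg_sub] at key
  exact (add_left_cancel key).symm
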